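/- For α ≥ 1, the maximal quantum value of the α-CHSH expression over all two-qubit states and ±1-valued qubit observables is 2√(α² + 1). -/

import Mathlib

open Matrix Kronecker Complex Real ComplexOrder

/-- 2×2 complex matrices (one qubit). -/
abbrev M2 := Matrix (Fin 2) (Fin 2) ℂ
/-- 4×4 complex matrices (two qubits), indexed by `Fin 2 × Fin 2`. -/
abbrev M4 := Matrix (Fin 2 × Fin 2) (Fin 2 × Fin 2) ℂ

noncomputable def σx : M2 := !![0, 1; 1, 0]
noncomputable def σy : M2 := !![0, -Complex.I; Complex.I, 0]
noncomputable def σz : M2 := !![1, 0; 0, -1]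

/-- A ±1-valued qubit observable: Hermitian involution. -/
def IsObs (A : M2) : Prop := A.IsHermitian ∧ A * A = 1

/-- A two-qubit density operator. -/
def IsState (ρ : M4) : Prop := ρ.PosSemidef ∧ ρ.trace = 1

/-- The α-CHSH Bell operator. -/
noncomputable def Sop (α : ℝ) (A0 A1 B0 B1 : M2) : M4 :=
  (α : ℂ) • (A0 ⊗ₖ B0 + A0 ⊗ₖ B1) + A1 ⊗ₖ B0 - A1 ⊗ₖ B1

/-- The α-CHSH Bell value of a state with given observables. -/
noncomputable def BellValue (ρ : M4) (α : ℝ) (A0 A1 B0 B1 : M2) : ℂ :=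
  (ρ * Sop α A0 A1 B0 B1).trace

/-- Computational basis vectors of ℂ²⊗ℂ². -/
def ket (i j : Fin 2) : Fin 2 × Fin 2 → ℂ := fun p => if p = (i, j) then 1 else 0

noncomputable def PhiP : Fin 2 × Fin 2 → ℂ := ((Real.sqrt 2 : ℂ))⁻¹ • (ket 0 0 + ket 1 1)
noncomputable def PhiM : Fin 2 × Fin 2 → ℂ := ((Real.sqrt 2 : ℂ))⁻¹ • (ket 0 0 - ket 1 1)
noncomputable def PsiP : Fin 2 × Fin 2 → ℂ := ((Real.sqrt 2 : ℂ))⁻¹ • (ket 0 1 + ket 1 0)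
noncomputable def PsiM : Fin 2 × Fin 2 → ℂ := ((Real.sqrt 2 : ℂ))⁻¹ • (ket 0 1 - ket 1 0)

/-- Rank-one projector |v⟩⟨v|. -/
noncomputable def proj (v : Fin 2 × Fin 2 → ℂ) : M4 := Matrix.vecMulVec v (star v)

/-- Bell-diagonal two-qubit state. -/
noncomputable def BellDiag (l1 l2 l3 l4 : ℝ) : M4 :=
  (l1 : ℂ) • proj PhiP + (l2 : ℂ) • proj PhiM + (l3 : ℂ) • proj PsiP + (l4 : ℂ) • proj PsiM

noncomputable def YY : M4 := σy ⊗ₖ σy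

attribute [local instance] Classical.propDecidable

/-- The positive semidefinite square root of a positive semidefinite matrix (as defined in
the older Mathlib, where `Matrix.PosSemidef.sqrt` existed). -/
noncomputable def Matrix.PosSemidef.sqrt {n : Type*} [Fintype n] [DecidableEq n] {𝕜 : Type*}
    [RCLike 𝕜] {A : Matrix n n 𝕜} (hA : A.PosSemidef) : Matrix n n 𝕜 :=
  (hA.1.eigenvectorUnitary : Matrix n n 𝕜) * diagonal ((↑) ∘ (√·) ∘ hA.1.eigenvalues) *
    (star hA.1.eigenvectorUnitary : Matrix n n 𝕜)

/-- Concurrence of a two-qubit state: `max {0, μ₁ − μ₂ − μ₃ − μ₄}` where the `μᵢ` are the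
decreasingly ordered square roots of the eigenvalues of `√ρ (σy⊗σy) ρ* (σy⊗σy) √ρ`
(for the decreasingly ordered values, `μ₁ − μ₂ − μ₃ − μ₄ = 2 max μᵢ − ∑ μᵢ`). -/
noncomputable def concurrence (ρ : M4) : ℝ :=
  if hρ : ρ.PosSemidef then
    if hX : (hρ.sqrt * (YY * ρ.map (starRingEnd ℂ) * YY) * hρ.sqrt).IsHermitian then
      let μ : Fin 2 × Fin 2 → ℝ := fun p => Real.sqrt (hX.eigenvalues p)
      max 0 (2 * (Finset.univ.sup' Finset.univ_nonempty μ) - ∑ p, μ p)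
    else 0
  else 0


section AuxCHSH

lemma trace_nonneg_of_posSemidef {n : Type*} [Fintype n] [DecidableEq n]
    {A : Matrix n n ℂ} (hA : A.PosSemidef) : 0 ≤ A.trace := by
  rw [Matrix.trace]
  refine Finset.sum_nonneg fun i _ => ?_
  exact hA.diag_nonneg

lemma kron_conjTranspose (A B : M2) : (A ⊗ₖ B)ᴴ = Aᴴ ⊗ₖ Bᴴ := by
  ext ⟨i, j⟩ ⟨k, l⟩
  simp [Matrix.conjTranspose_apply, Matrix.kroneckerMap_apply]

lemma kron_isHermitian {A B : M2} (hA : A.IsHermitian) (hB : B.IsHermitian) :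
    (A ⊗ₖ B).IsHermitian := by
  unfold Matrix.IsHermitian
  rw [kron_conjTranspose, hA.eq, hB.eq]

lemma kron_sub (A B C : M2) : A ⊗ₖ (B - C) = A ⊗ₖ B - A ⊗ₖ C := by
  ext ⟨i, j⟩ ⟨k, l⟩
  simp [Matrix.kroneckerMap_apply, mul_sub]

lemma trace_mul_star {ρ M : M4} (hρ : ρ.IsHermitian) (hM : M.IsHermitian) :
    star ((ρ * M).trace) = (ρ * M).trace := by
  rw [← Matrix.trace_conjTranspose, Matrix.conjTranspose_mul, hρ.eq, hM.eq,
    Matrix.trace_mul_comm]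

lemma cs_bound {ρ M : M4} (hρ : ρ.PosSemidef) (htr : ρ.trace = 1)
    (hM : M.IsHermitian) :
    ((ρ * M).trace.re) ^ 2 ≤ ((ρ * (M * M)).trace).re := by
  set t : ℂ := (ρ * M).trace with ht
  have hst : star t = t := trace_mul_star hρ.1 hM
  have him : t.im = 0 := by
    have := congrArg Complex.im hst
    simp at this
    linarith
  set N : M4 := M - t • 1 with hN
  have hNh : Nᴴ = N := by
    rw [hN, Matrix.conjTranspose_sub, hM.eq, Matrix.conjTranspose_smul,
      Matrix.conjTranspose_one, hst]
  have hpsd : (Nᴴ * ρ * N).PosSemidef := hρ.conjTranspose_mul_mul_same N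
  have h0 : 0 ≤ (Nᴴ * ρ * N).trace := trace_nonneg_of_posSemidef hpsd
  have hNN : N * N = M * M - (2 * t) • M + (t * t) • (1 : M4) := by
    rw [hN]
    simp only [sub_mul, mul_sub, Matrix.smul_mul, Matrix.mul_smul, one_mul, mul_one,
      smul_smul]
    module
  have hexp : (Nᴴ * ρ * N).trace = (ρ * (M * M)).trace - t * t := by
    rw [hNh, Matrix.trace_mul_cycle, ← Matrix.mul_assoc, Matrix.trace_mul_comm,
      hNN]
    rw [Matrix.mul_add, Matrix.mul_sub, Matrix.trace_add, Matrix.trace_sub,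
      Matrix.mul_smul, Matrix.mul_smul, Matrix.trace_smul, Matrix.trace_smul,
      Matrix.mul_one, htr, ← ht]
    simp only [smul_eq_mul]
    rw [← Matrix.mul_assoc]
    ring
  rw [hexp] at h0
  have hre := h0.1
  simp only [Complex.zero_re, Complex.sub_re, Complex.mul_re, him] at hre
  nlinarith [hre]

lemma upper_bound (α : ℝ) (hα : 1 ≤ α) (ρ : M4) (A0 A1 B0 B1 : M2)
    (hρ : ρ.PosSemidef) (htr : ρ.trace = 1)
    (hA0 : IsObs A0) (hA1 : IsObs A1) (hB0 : IsObs B0) (hB1 : IsObs B1) :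
    ((ρ * ((α : ℂ) • (A0 ⊗ₖ B0 + A0 ⊗ₖ B1) + A1 ⊗ₖ B0 - A1 ⊗ₖ B1)).trace).re
      ≤ 2 * Real.sqrt (α ^ 2 + 1) := by
  set C : M2 := B0 + B1 with hCdef
  set D : M2 := B0 - B1 with hDdef
  have hC : C.IsHermitian := hB0.1.add hB1.1
  have hD : D.IsHermitian := hB0.1.sub hB1.1
  have hMC : (A0 ⊗ₖ C).IsHermitian := kron_isHermitian hA0.1 hC
  have hMD : (A1 ⊗ₖ D).IsHermitian := kron_isHermitian hA1.1 hD
  have hCD : C * C + D * D = (4 : ℂ) • (1 : M2) := by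
    rw [hCdef, hDdef]
    simp only [add_mul, mul_add, sub_mul, mul_sub, hB0.2, hB1.2]
    module
  have hSq : ∀ (A E : M2), A * A = 1 → (A ⊗ₖ E) * (A ⊗ₖ E) = (1 : M2) ⊗ₖ (E * E) := by
    intro A E hA
    rw [← Matrix.mul_kronecker_mul, hA]
  set x : ℝ := ((ρ * (A0 ⊗ₖ C)).trace).re with hx
  set y : ℝ := ((ρ * (A1 ⊗ₖ D)).trace).re with hy
  set u : ℝ := ((ρ * ((1 : M2) ⊗ₖ (C * C))).trace).re with hu
  set v : ℝ := ((ρ * ((1 : M2) ⊗ₖ (D * D))).trace).re with hv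
  have hxu : x ^ 2 ≤ u := by
    have := cs_bound hρ htr hMC
    rwa [hSq A0 C hA0.2] at this
  have hyv : y ^ 2 ≤ v := by
    have := cs_bound hρ htr hMD
    rwa [hSq A1 D hA1.2] at this
  have huv : u + v = 4 := by
    have h4 : (ρ * ((1 : M2) ⊗ₖ (C * C))).trace + (ρ * ((1 : M2) ⊗ₖ (D * D))).trace
        = 4 := by
      rw [← Matrix.trace_add, ← Matrix.mul_add, ← Matrix.kronecker_add, hCD]
      rw [Matrix.kronecker_smul, Matrix.one_kronecker_one, Matrix.mul_smul,
        Matrix.trace_smul, Matrix.mul_one, htr]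
      simp
    have := congrArg Complex.re h4
    simpa [hu, hv] using this
  have hS : (α : ℂ) • (A0 ⊗ₖ B0 + A0 ⊗ₖ B1) + A1 ⊗ₖ B0 - A1 ⊗ₖ B1
      = (α : ℂ) • (A0 ⊗ₖ C) + A1 ⊗ₖ D := by
    rw [hCdef, hDdef, Matrix.kronecker_add, kron_sub]
    abel
  have htrace : ((ρ * ((α : ℂ) • (A0 ⊗ₖ B0 + A0 ⊗ₖ B1) + A1 ⊗ₖ B0 - A1 ⊗ₖ B1)).trace).re
      = α * x + y := by
    rw [hS, Matrix.mul_add, Matrix.mul_smul, Matrix.trace_add, Matrix.trace_smul]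
    simp [hx, hy, Complex.add_re, smul_eq_mul]
  rw [htrace]
  have hu0 : 0 ≤ u := le_trans (sq_nonneg x) hxu
  have hv0 : 0 ≤ v := le_trans (sq_nonneg y) hyv
  have hxsu : x ≤ Real.sqrt u :=
    calc x ≤ |x| := le_abs_self x
    _ = Real.sqrt (x ^ 2) := (Real.sqrt_sq_eq_abs x).symm
    _ ≤ Real.sqrt u := Real.sqrt_le_sqrt hxu
  have hysv : y ≤ Real.sqrt v :=
    calc y ≤ |y| := le_abs_self y
    _ = Real.sqrt (y ^ 2) := (Real.sqrt_sq_eq_abs y).symm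
    _ ≤ Real.sqrt v := Real.sqrt_le_sqrt hyv
  have hα0 : (0 : ℝ) ≤ α := by linarith
  have step1 : α * x + y ≤ α * Real.sqrt u + Real.sqrt v := by
    have := mul_le_mul_of_nonneg_left hxsu hα0
    linarith
  refine step1.trans ?_
  set a := Real.sqrt u with ha
  set b := Real.sqrt v with hb
  set r := Real.sqrt (α ^ 2 + 1) with hr
  have ha2 : a ^ 2 = u := Real.sq_sqrt hu0
  have hb2 : b ^ 2 = v := Real.sq_sqrt hv0
  have hr2 : r ^ 2 = α ^ 2 + 1 := Real.sq_sqrt (by positivity)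
  have ha0 : 0 ≤ a := Real.sqrt_nonneg u
  have hb0 : 0 ≤ b := Real.sqrt_nonneg v
  have hrpos : 0 < r := Real.sqrt_pos.mpr (by positivity)
  nlinarith [sq_nonneg (α * b - a), sq_nonneg (α * a + b - 2 * r), hrpos.le,
    mul_nonneg (mul_nonneg hα0 ha0) hb0]

lemma proj_posSemidef (v : Fin 2 × Fin 2 → ℂ) : (proj v).PosSemidef := by
  have h : proj v = Matrix.replicateCol (Fin 1) v * (Matrix.replicateCol (Fin 1) v)ᴴ := by
    rw [Matrix.conjTranspose_replicateCol, proj, Matrix.vecMulVec_eq (Fin 1)]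
    rfl
  rw [h]
  exact Matrix.posSemidef_self_mul_conjTranspose _

lemma sqrt2_sq : ((Real.sqrt 2 : ℂ)) * ((Real.sqrt 2 : ℂ)) = 2 := by
  norm_cast
  exact Real.mul_self_sqrt (by norm_num)

lemma trace_proj_PhiP : (proj PhiP).trace = 1 := by
  have h2 := sqrt2_sq
  rw [Matrix.trace]
  simp only [Matrix.diag, proj, Matrix.vecMulVec_apply, PhiP, ket, Pi.star_apply,
    Pi.smul_apply, Pi.add_apply, smul_eq_mul]
  rw [Fintype.sum_prod_type]
  simp only [Fin.sum_univ_two]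
  norm_num
  field_simp
  rw [sq, sqrt2_sq]
  norm_num

lemma bell_value_calc (α c s : ℝ) :
    ((proj PhiP * ((α : ℂ) • (σz ⊗ₖ !![(c:ℂ), s; s, -c] + σz ⊗ₖ !![(c:ℂ), -s; -s, -c]) +
      σx ⊗ₖ !![(c:ℂ), s; s, -c] - σx ⊗ₖ !![(c:ℂ), -s; -s, -c])).trace)
    = ((2 * α * c + 2 * s : ℝ) : ℂ) := by
  have h2 := sqrt2_sq
  rw [Matrix.trace]
  simp only [Matrix.diag, Matrix.mul_apply, proj, Matrix.vecMulVec_apply, PhiP, ket,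
    Pi.star_apply, Pi.smul_apply, Pi.add_apply, smul_eq_mul,
    Matrix.add_apply, Matrix.sub_apply, Matrix.smul_apply, Matrix.kroneckerMap_apply,
    σz, σx, Fintype.sum_prod_type, Fin.sum_univ_two]
  norm_num
  have h2' : ((Real.sqrt 2 : ℂ))⁻¹ * ((Real.sqrt 2 : ℂ))⁻¹ = (2 : ℂ)⁻¹ := by
    rw [← mul_inv, h2]
  rw [h2']
  ring

lemma obs_sz : IsObs σz := by
  constructor
  · ext i j
    fin_cases i <;> fin_cases j <;>
      simp [σz, Matrix.conjTranspose_apply]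
  · ext i j
    fin_cases i <;> fin_cases j <;>
      simp [σz, Matrix.mul_apply, Fin.sum_univ_two, Matrix.one_apply]

lemma obs_sx : IsObs σx := by
  constructor
  · ext i j
    fin_cases i <;> fin_cases j <;>
      simp [σx, Matrix.conjTranspose_apply]
  · ext i j
    fin_cases i <;> fin_cases j <;>
      simp [σx, Matrix.mul_apply, Fin.sum_univ_two, Matrix.one_apply]

lemma obs_B (a b : ℂ) (ha : star a = a) (hb : star b = b) (h : a * a + b * b = 1) :
    IsObs !![a, b; b, -a] := by
  constructor
  · ext i j
    fin_cases i <;> fin_cases j <;>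
      simp [Matrix.conjTranspose_apply, ha, hb]
  · ext i j
    fin_cases i <;> fin_cases j <;>
      simp [Matrix.mul_apply, Fin.sum_univ_two, Matrix.one_apply] <;>
      first
        | linear_combination h
        | ring

end AuxCHSH

/-- The maximal quantum value of the α-CHSH expression over all two-qubit states and
±1-valued qubit observables is `2√(α²+1)`. -/
theorem max_CHSH_quantum (α : ℝ) (hα : 1 ≤ α) :
    IsGreatest { s : ℝ | ∃ (ρ : M4) (A0 A1 B0 B1 : M2), IsState ρ ∧
        IsObs A0 ∧ IsObs A1 ∧ IsObs B0 ∧ IsObs B1 ∧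
        BellValue ρ α A0 A1 B0 B1 = (s : ℂ) }
      (2 * Real.sqrt (α ^ 2 + 1)) := by
  constructor
  · -- membership: explicit state and observables achieving the bound
    set r : ℝ := Real.sqrt (α ^ 2 + 1) with hrdef
    have hrpos : 0 < r := Real.sqrt_pos.mpr (by positivity)
    have hr2 : r ^ 2 = α ^ 2 + 1 := Real.sq_sqrt (by positivity)
    set c : ℝ := α / r with hcdef
    set s : ℝ := 1 / r with hsdef
    have hcs : (c : ℂ) * c + (s : ℂ) * s = 1 := by
      have : c ^ 2 + s ^ 2 = 1 := by
        rw [hcdef, hsdef]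
        field_simp
        linarith [hr2]
      norm_cast
      linear_combination this
    have hcs' : (c : ℂ) * c + (-(s : ℂ)) * (-(s : ℂ)) = 1 := by
      rw [← hcs]; ring
    refine ⟨proj PhiP, σz, σx, !![(c:ℂ), s; s, -c], !![(c:ℂ), -s; -s, -c],
      ⟨proj_posSemidef _, trace_proj_PhiP⟩, obs_sz, obs_sx,
      obs_B _ _ (by simp [Complex.star_def, Complex.conj_ofReal])
        (by simp [Complex.star_def, Complex.conj_ofReal]) hcs,
      obs_B _ _ (by simp [Complex.star_def, Complex.conj_ofReal])
        (by simp [Complex.star_def, Complex.conj_ofReal]) hcs', ?_⟩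
    rw [BellValue, Sop, bell_value_calc α c s]
    norm_cast
    rw [hcdef, hsdef]
    field_simp
    linarith [hr2]
  · -- upper bound
    rintro sval ⟨ρ, A0, A1, B0, B1, ⟨hρ, htr⟩, hA0, hA1, hB0, hB1, hbv⟩
    have hub := upper_bound α hα ρ A0 A1 B0 B1 hρ htr hA0 hA1 hB0 hB1
    have hre : ((ρ * ((α : ℂ) • (A0 ⊗ₖ B0 + A0 ⊗ₖ B1) + A1 ⊗ₖ B0 - A1 ⊗ₖ B1)).trace).re
        = sval := by
      have : BellValue ρ α A0 A1 B0 B1 = (sval : ℂ) := hbv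
      rw [BellValue, Sop] at this
      rw [this, Complex.ofReal_re]
    rw [hre] at hub
    exact hub
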